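/- Let c₁, c₂, c₃ ∈ ℝ with c₁c₃ ≠ 0. The lattice equation with polynomial E(w,x,y,z) = wy + c₁wx + c₃yz + c₂(wz + xy), i.e. u_{n,m}u_{n,m+1} + c₁u_{n,m}u_{n+1,m} + c₃u_{n,m+1}u_{n+1,m+1} + c₂(u_{n,m}u_{n+1,m+1} + u_{n+1,m}u_{n,m+1}) = 0, admits the five-point generalized symmetry with generator g_{n,m} = [c₂c₃c₁(u_{n,m+1}u_{n,m-1} + u_{n,m}²) + (1/2)(c₂² + c₃c₁)u_{n,m}(c₃u_{n,m+1} + c₁u_{n,m-1})]/(c₃u_{n,m+1} - c₁u_{n,m-1}): for every solution u : ℤ × ℤ → ℝ of the equation satisfying c₃u_{n,m+1} - c₁u_{n,m-1} ≠ 0 for all (n,m), and every (n,m) ∈ ℤ², the linearized equation g_{n,m}·∂₁E + g_{n+1,m}·∂₂E + g_{n,m+1}·∂₃E + g_{n+1,m+1}·∂₄E = 0 holds, where each ∂ᵢE is evaluated at (u_{n,m}, u_{n+1,m}, u_{n,m+1}, u_{n+1,m+1}). -/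

import Mathlib

private lemma deriv_lin' (k C t : ℝ) : deriv (fun w => w * k + C) t = k := by
  have h : HasDerivAt (fun w : ℝ => w * k + C) (1 * k) t :=
    ((hasDerivAt_id t).mul_const k).add_const C
  simpa using h.deriv

set_option maxHeartbeats 4000000 in
theorem stmt_12
    (c₁ c₂ c₃ : ℝ) (h : c₁ * c₃ ≠ 0)
    (E : ℝ → ℝ → ℝ → ℝ → ℝ)
    (hE : ∀ w x y z : ℝ, E w x y z = w * y + c₁ * (w * x) + c₃ * (y * z) + c₂ * (w * z + x * y))
    (u : ℤ × ℤ → ℝ)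
    (hu : ∀ n m : ℤ, E (u (n, m)) (u (n + 1, m)) (u (n, m + 1)) (u (n + 1, m + 1)) = 0)
    (hne : ∀ n m : ℤ, c₃ * u (n, m + 1) - c₁ * u (n, m - 1) ≠ 0)
    (g : ℤ × ℤ → ℝ)
    (hg : ∀ n m : ℤ, g (n, m) = (c₂ * c₃ * c₁ * (u (n, m + 1) * u (n, m - 1) + u (n, m) ^ 2) + (1 / 2) * (c₂ ^ 2 + c₃ * c₁) * u (n, m) * (c₃ * u (n, m + 1) + c₁ * u (n, m - 1))) / (c₃ * u (n, m + 1) - c₁ * u (n, m - 1)))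
    (n m : ℤ) :
    g (n, m) * deriv (fun w => E w (u (n + 1, m)) (u (n, m + 1)) (u (n + 1, m + 1))) (u (n, m))
      + g (n + 1, m) * deriv (fun x => E (u (n, m)) x (u (n, m + 1)) (u (n + 1, m + 1))) (u (n + 1, m))
      + g (n, m + 1) * deriv (fun y => E (u (n, m)) (u (n + 1, m)) y (u (n + 1, m + 1))) (u (n, m + 1))
      + g (n + 1, m + 1) * deriv (fun z => E (u (n, m)) (u (n + 1, m)) (u (n, m + 1)) z) (u (n + 1, m + 1)) = 0 := by
  have i1 : m - 1 + 1 = m := by ring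
  have i2 : m + 1 + 1 = m + 2 := by ring
  have i3 : m + 1 - 1 = m := by ring
  have H1 := hu n (m - 1)
  have H2 := hu n m
  have H3 := hu n (m + 1)
  rw [hE] at H1 H2 H3
  rw [i1] at H1
  rw [i2] at H3
  have d1 : deriv (fun w => E w (u (n + 1, m)) (u (n, m + 1)) (u (n + 1, m + 1))) (u (n, m))
      = u (n, m + 1) + c₁ * u (n + 1, m) + c₂ * u (n + 1, m + 1) := by
    have hf : (fun w => E w (u (n + 1, m)) (u (n, m + 1)) (u (n + 1, m + 1)))
        = fun w => w * (u (n, m + 1) + c₁ * u (n + 1, m) + c₂ * u (n + 1, m + 1))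
            + (c₃ * (u (n, m + 1) * u (n + 1, m + 1)) + c₂ * (u (n + 1, m) * u (n, m + 1))) := by
      funext w; rw [hE]; ring
    rw [hf, deriv_lin']
  have d2 : deriv (fun x => E (u (n, m)) x (u (n, m + 1)) (u (n + 1, m + 1))) (u (n + 1, m))
      = c₁ * u (n, m) + c₂ * u (n, m + 1) := by
    have hf : (fun x => E (u (n, m)) x (u (n, m + 1)) (u (n + 1, m + 1)))
        = fun x => x * (c₁ * u (n, m) + c₂ * u (n, m + 1))
            + (u (n, m) * u (n, m + 1) + c₃ * (u (n, m + 1) * u (n + 1, m + 1)) + c₂ * (u (n, m) * u (n + 1, m + 1))) := by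
      funext x; rw [hE]; ring
    rw [hf, deriv_lin']
  have d3 : deriv (fun y => E (u (n, m)) (u (n + 1, m)) y (u (n + 1, m + 1))) (u (n, m + 1))
      = u (n, m) + c₃ * u (n + 1, m + 1) + c₂ * u (n + 1, m) := by
    have hf : (fun y => E (u (n, m)) (u (n + 1, m)) y (u (n + 1, m + 1)))
        = fun y => y * (u (n, m) + c₃ * u (n + 1, m + 1) + c₂ * u (n + 1, m))
            + (c₁ * (u (n, m) * u (n + 1, m)) + c₂ * (u (n, m) * u (n + 1, m + 1))) := by
      funext y; rw [hE]; ring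
    rw [hf, deriv_lin']
  have d4 : deriv (fun z => E (u (n, m)) (u (n + 1, m)) (u (n, m + 1)) z) (u (n + 1, m + 1))
      = c₃ * u (n, m + 1) + c₂ * u (n, m) := by
    have hf : (fun z => E (u (n, m)) (u (n + 1, m)) (u (n, m + 1)) z)
        = fun z => z * (c₃ * u (n, m + 1) + c₂ * u (n, m))
            + (u (n, m) * u (n, m + 1) + c₁ * (u (n, m) * u (n + 1, m)) + c₂ * (u (n + 1, m) * u (n, m + 1))) := by
      funext z; rw [hE]; ring
    rw [hf, deriv_lin']
  rw [d1, d2, d3, d4, hg n m, hg (n + 1) m, hg n (m + 1), hg (n + 1) (m + 1)]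
  rw [i2, i3]
  have hD1 := hne n m
  have hD2 := hne (n + 1) m
  have hD3 := hne n (m + 1)
  have hD4 := hne (n + 1) (m + 1)
  rw [i2, i3] at hD3 hD4
  simp only [one_div, div_mul_eq_mul_div]
  rw [div_add_div _ _ hD1 hD2, div_add_div _ _ (mul_ne_zero hD1 hD2) hD3, div_add_div _ _ (mul_ne_zero (mul_ne_zero hD1 hD2) hD3) hD4, div_eq_zero_iff]
  refine Or.inl ((mul_eq_zero.mp (?_ : (16:ℝ) * _ = 0)).resolve_left (by norm_num))
  linear_combination (16:ℝ) * ((((u (n + 1, m + 2))*(u (n, m + 2))*(u (n, m))^2*c₁^2*c₂*c₃^2) + ((-1 : ℝ)*(u (n + 1, m + 2))*(u (n, m + 2))*(u (n, m))*(u (n + 1, m))*c₁^3*c₃^3) + ((u (n + 1, m + 2))*(u (n, m + 2))*(u (n, m))*(u (n + 1, m))*c₁^2*c₂^2*c₃^2) + ((-1 : ℝ)*(u (n + 1, m + 2))*(u (n, m + 2))*(u (n, m + 1))^2*c₁*c₂*c₃^3) + ((u (n + 1, m + 2))*(u (n, m + 2))*(u (n, m + 1))*(u (n + 1, m + 1))*c₁^2*c₃^4)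 + ((-1 : ℝ)*(u (n + 1, m + 2))*(u (n, m + 2))*(u (n, m + 1))*(u (n + 1, m + 1))*c₁*c₂^2*c₃^3) + ((u (n + 1, m + 2))*(u (n, m))^2*(u (n, m + 1))*c₁^3*c₃^2) + ((u (n + 1, m + 2))*(u (n, m))^2*(u (n, m + 1))*c₁^2*c₂^2*c₃) + ((u (n + 1, m + 2))*(u (n, m))^2*(u (n + 1, m))*c₁^4*c₃^2) + ((u (n + 1, m + 2))*(u (n, m))^2*(u (n + 1, m + 1))*c₁^3*c₂*c₃^2) + ((2 : ℝ)*(u (n + 1, m + 2))*(u (n, m))*(u (n, m + 1))^2*c₁^2*c₂*c₃^2) + ((u (n + 1, m + 2))*(u (n, m))*(u (n, m + 1))*(u (n + 1, m))*c₁^3*c₂*c₃^2) + ((u (n + 1, m + 2))*(u (n, m))*(u (n, m + 1))*(u (n + 1, m))*c₁^2*c₂^3*c₃) + ((2 : ℝ)*(u (n + 1, m + 2))*(u (n, m))*(u (n, m + 1))*(u (n + 1, m + 1))*c₁^2*c₂^2*c₃^2) + ((u (n + 1, m + 2))*(u (n, m + 1))^2*(u (n + 1, m))*c₁^2*c₂^2*c₃^2)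 + ((u (n + 1, m + 2))*(u (n, m + 1))^2*(u (n + 1, m + 1))*c₁^2*c₂*c₃^3) + ((-1 : ℝ)*(u (n, m + 2))*(u (n, m))^2*(u (n + 1, m))*c₁^3*c₂*c₃) + ((u (n, m + 2))*(u (n, m))*(u (n + 1, m))^2*c₁^4*c₃^2) + ((u (n, m + 2))*(u (n, m))*(u (n + 1, m))*(u (n + 1, m + 1))*c₁^3*c₂*c₃^2) + ((u (n, m + 2))*(u (n, m))*(u (n + 1, m))*(u (n + 1, m + 1))*c₁^2*c₂^3*c₃) + ((u (n, m + 2))*(u (n, m))*(u (n + 1, m + 1))^2*c₁^2*c₂^2*c₃^2) + ((u (n, m + 2))*(u (n, m + 1))^2*(u (n + 1, m))*c₁^2*c₂*c₃^2) + ((u (n, m + 2))*(u (n, m + 1))*(u (n + 1, m))^2*c₁^3*c₂*c₃^2) + ((2 : ℝ)*(u (n, m + 2))*(u (n, m + 1))*(u (n + 1, m))*(u (n + 1, m + 1))*c₁^2*c₂^2*c₃^2) + ((u (n, m + 2))*(u (n, m + 1))*(u (n + 1, m + 1))^2*c₁^2*c₂*c₃^3) + ((-1 : ℝ)*(u (n,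 m))^2*(u (n, m + 1))*(u (n + 1, m))*c₁^4*c₃) + ((-1 : ℝ)*(u (n, m))^2*(u (n, m + 1))*(u (n + 1, m))*c₁^3*c₂^2) + ((-1 : ℝ)*(u (n, m))^2*(u (n + 1, m))^2*c₁^5*c₃) + ((-1 : ℝ)*(u (n, m))^2*(u (n + 1, m))^2*c₁^4*c₂^2) + ((-2 : ℝ)*(u (n, m))^2*(u (n + 1, m))*(u (n + 1, m + 1))*c₁^4*c₂*c₃) + ((-1 : ℝ)*(u (n, m))^2*(u (n + 1, m))*(u (n + 1, m + 1))*c₁^3*c₂^3) + ((-1 : ℝ)*(u (n, m))^2*(u (n + 1, m + 1))^2*c₁^3*c₂^2*c₃) + ((-2 : ℝ)*(u (n, m))*(u (n, m + 1))^2*(u (n + 1, m))*c₁^3*c₂*c₃) + ((-2 : ℝ)*(u (n, m))*(u (n, m + 1))*(u (n + 1, m))^2*c₁^4*c₂*c₃) + ((-1 : ℝ)*(u (n, m))*(u (n, m + 1))*(u (n + 1, m))^2*c₁^3*c₂^3) + ((-1 : ℝ)*(u (n, m))*(u (n, m + 1))*(u (n + 1, m))*(u (n + 1, m + 1))*c₁^4*c₃^2)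 + ((-3 : ℝ)*(u (n, m))*(u (n, m + 1))*(u (n + 1, m))*(u (n + 1, m + 1))*c₁^3*c₂^2*c₃) + ((-1 : ℝ)*(u (n, m))*(u (n, m + 1))*(u (n + 1, m + 1))^2*c₁^3*c₂*c₃^2) + ((-1 : ℝ)*(u (n, m + 1))^2*(u (n + 1, m))^2*c₁^3*c₂^2*c₃) + ((-1 : ℝ)*(u (n, m + 1))^2*(u (n + 1, m))*(u (n + 1, m + 1))*c₁^3*c₂*c₃^2)) * H1 + (((-2 : ℝ)*(u (n + 1, m - 1))*(u (n + 1, m + 2))*(u (n, m + 2))*(u (n, m))*c₁^2*c₂*c₃^3) + ((-1 : ℝ)*(u (n + 1, m - 1))*(u (n + 1, m + 2))*(u (n, m + 2))*(u (n, m + 1))*c₁^2*c₃^4) + ((u (n + 1, m - 1))*(u (n + 1, m + 2))*(u (n, m + 2))*(u (n + 1, m))*c₁^3*c₃^4) + ((u (n + 1, m - 1))*(u (n + 1, m + 2))*(u (n, m + 2))*(u (n + 1, m + 1))*c₁^2*c₂*c₃^4) + ((-2 : ℝ)*(u (n + 1, m - 1))*(u (n + 1, m + 2))*(u (n, m))*(u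 (n, m + 1))*c₁^2*c₂^2*c₃^2) + ((-1 : ℝ)*(u (n + 1, m - 1))*(u (n + 1, m + 2))*(u (n, m + 1))^2*c₁^2*c₂*c₃^3) + ((u (n + 1, m - 1))*(u (n + 1, m + 2))*(u (n, m + 1))*(u (n + 1, m))*c₁^3*c₂*c₃^3) + ((u (n + 1, m - 1))*(u (n + 1, m + 2))*(u (n, m + 1))*(u (n + 1, m + 1))*c₁^2*c₂^2*c₃^3) + ((u (n + 1, m - 1))*(u (n, m + 2))*(u (n, m))^2*c₁^2*c₂^2*c₃) + ((-2 : ℝ)*(u (n + 1, m - 1))*(u (n, m + 2))*(u (n, m))*(u (n + 1, m + 1))*c₁^2*c₂^2*c₃^2) + ((u (n + 1, m - 1))*(u (n, m + 2))*(u (n, m + 1))*(u (n + 1, m))*c₁^3*c₃^3) + ((u (n + 1, m - 1))*(u (n, m + 2))*(u (n + 1, m))*(u (n + 1, m + 1))*c₁^3*c₂*c₃^3) + ((u (n + 1, m - 1))*(u (n, m + 2))*(u (n + 1, m + 1))^2*c₁^2*c₂^2*c₃^3) + ((u (n + 1, m - 1))*(u (n, m))^2*(u (n + 1, m))*c₁^3*c₂^3)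 + ((u (n + 1, m - 1))*(u (n, m))^2*(u (n + 1, m + 1))*c₁^3*c₂^2*c₃) + ((2 : ℝ)*(u (n + 1, m - 1))*(u (n, m))*(u (n, m + 1))*(u (n + 1, m))*c₁^3*c₂^2*c₃) + ((u (n + 1, m - 1))*(u (n, m + 1))^2*(u (n + 1, m))*c₁^3*c₂*c₃^2) + ((u (n + 1, m - 1))*(u (n, m + 1))*(u (n + 1, m))*(u (n + 1, m + 1))*c₁^4*c₃^3) + ((u (n + 1, m - 1))*(u (n, m + 1))*(u (n + 1, m + 1))^2*c₁^3*c₂*c₃^3) + ((u (n + 1, m + 2))*(u (n, m - 1))*(u (n, m + 2))*(u (n, m + 1))*c₁*c₂*c₃^3) + ((-1 : ℝ)*(u (n + 1, m + 2))*(u (n, m - 1))*(u (n, m + 2))*(u (n + 1, m))*c₁^2*c₂*c₃^3) + ((-1 : ℝ)*(u (n + 1, m + 2))*(u (n, m - 1))*(u (n, m + 2))*(u (n + 1, m + 1))*c₁^2*c₃^4) + ((-1 : ℝ)*(u (n + 1, m + 2))*(u (n, m - 1))*(u (n, m))^2*c₁^3*c₃^2) + ((-2 : ℝ)*(u (n +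 1, m + 2))*(u (n, m - 1))*(u (n, m))*(u (n, m + 1))*c₁^2*c₂*c₃^2) + ((-1 : ℝ)*(u (n + 1, m + 2))*(u (n, m - 1))*(u (n, m + 1))*(u (n + 1, m))*c₁^2*c₂^2*c₃^2) + ((-1 : ℝ)*(u (n + 1, m + 2))*(u (n, m - 1))*(u (n, m + 1))*(u (n + 1, m + 1))*c₁^2*c₂*c₃^3) + ((2 : ℝ)*(u (n + 1, m + 2))*(u (n, m + 2))*(u (n, m))*(u (n + 1, m + 1))*c₁*c₂*c₃^4) + ((u (n + 1, m + 2))*(u (n, m + 2))*(u (n, m + 1))*(u (n + 1, m))*c₁*c₂*c₃^4) + ((u (n + 1, m + 2))*(u (n, m + 2))*(u (n, m + 1))*(u (n + 1, m + 1))*c₁*c₃^5) + ((u (n + 1, m + 2))*(u (n, m + 2))*(u (n, m + 1))*(u (n + 1, m + 1))*c₂^2*c₃^4) + ((-1 : ℝ)*(u (n + 1, m + 2))*(u (n, m + 2))*(u (n + 1, m))*(u (n + 1, m + 1))*c₁^2*c₃^5) + ((-1 : ℝ)*(u (n + 1, m + 2))*(u (n, m + 2))*(u (n + 1, m + 1))^2*c₁*c₂*c₃^5)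 + ((-1 : ℝ)*(u (n + 1, m + 2))*(u (n, m))^2*(u (n + 1, m))*c₁^3*c₃^3) + ((-1 : ℝ)*(u (n + 1, m + 2))*(u (n, m))^2*(u (n + 1, m + 1))*c₁^2*c₂*c₃^3) + ((-2 : ℝ)*(u (n + 1, m + 2))*(u (n, m))*(u (n, m + 1))*(u (n + 1, m))*c₁^2*c₂*c₃^3) + ((u (n + 1, m + 2))*(u (n, m + 1))^2*(u (n + 1, m + 1))*c₁*c₂*c₃^4) + ((-1 : ℝ)*(u (n + 1, m + 2))*(u (n, m + 1))*(u (n + 1, m))*(u (n + 1, m + 1))*c₁^2*c₂*c₃^4) + ((-1 : ℝ)*(u (n + 1, m + 2))*(u (n, m + 1))*(u (n + 1, m + 1))^2*c₁*c₂^2*c₃^4) + ((u (n, m - 1))*(u (n, m + 2))*(u (n, m))^2*c₁^2*c₂*c₃) + ((-1 : ℝ)*(u (n, m - 1))*(u (n, m + 2))*(u (n, m))*(u (n + 1, m))*c₁^3*c₃^2) + ((u (n, m - 1))*(u (n, m + 2))*(u (n, m))*(u (n + 1, m))*c₁^2*c₂^2*c₃) + ((-1 : ℝ)*(u (n, m -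 1))*(u (n, m + 2))*(u (n, m + 1))*(u (n + 1, m))*c₁^2*c₂*c₃^2) + ((-1 : ℝ)*(u (n, m - 1))*(u (n, m + 2))*(u (n + 1, m))*(u (n + 1, m + 1))*c₁^2*c₂^2*c₃^2) + ((-1 : ℝ)*(u (n, m - 1))*(u (n, m + 2))*(u (n + 1, m + 1))^2*c₁^2*c₂*c₃^3) + ((u (n, m - 1))*(u (n, m))^2*(u (n + 1, m))*c₁^4*c₃) + ((u (n, m - 1))*(u (n, m))^2*(u (n + 1, m))*c₁^3*c₂^2) + ((u (n, m - 1))*(u (n, m))^2*(u (n + 1, m + 1))*c₁^3*c₂*c₃) + ((2 : ℝ)*(u (n, m - 1))*(u (n, m))*(u (n, m + 1))*(u (n + 1, m))*c₁^3*c₂*c₃) + ((u (n, m - 1))*(u (n, m))*(u (n + 1, m))^2*c₁^3*c₂^3) + ((2 : ℝ)*(u (n, m - 1))*(u (n, m))*(u (n + 1, m))*(u (n + 1, m + 1))*c₁^3*c₂^2*c₃) + ((u (n, m - 1))*(u (n, m))*(u (n + 1, m + 1))^2*c₁^3*c₂*c₃^2) + ((u (n, m - 1))*(u (n, m + 1))*(u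 (n + 1, m))^2*c₁^3*c₂^2*c₃) + ((u (n, m - 1))*(u (n, m + 1))*(u (n + 1, m))*(u (n + 1, m + 1))*c₁^3*c₂*c₃^2) + ((u (n, m + 2))*(u (n, m))^2*(u (n + 1, m))*c₁^2*c₂*c₃^2) + ((-1 : ℝ)*(u (n, m + 2))*(u (n, m))*(u (n + 1, m))^2*c₁^3*c₃^3) + ((-2 : ℝ)*(u (n, m + 2))*(u (n, m))*(u (n + 1, m))*(u (n + 1, m + 1))*c₁^2*c₂*c₃^3) + ((u (n, m + 2))*(u (n, m))*(u (n + 1, m + 1))^2*c₁*c₂^2*c₃^3) + ((-1 : ℝ)*(u (n, m + 2))*(u (n, m + 1))*(u (n + 1, m))^2*c₁^2*c₂*c₃^3) + ((-1 : ℝ)*(u (n, m + 2))*(u (n, m + 1))*(u (n + 1, m))*(u (n + 1, m + 1))*c₁^2*c₃^4) + ((-1 : ℝ)*(u (n, m + 2))*(u (n, m + 1))*(u (n + 1, m))*(u (n + 1, m + 1))*c₁*c₂^2*c₃^3) + ((-1 : ℝ)*(u (n, m + 2))*(u (n + 1, m))*(u (n + 1, m + 1))^2*c₁^2*c₂*c₃^4)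 + ((-1 : ℝ)*(u (n, m + 2))*(u (n + 1, m + 1))^3*c₁*c₂^2*c₃^4) + ((u (n, m))^2*(u (n + 1, m))^2*c₁^4*c₃^2) + ((u (n, m))^2*(u (n + 1, m))^2*c₁^3*c₂^2*c₃) + ((2 : ℝ)*(u (n, m))^2*(u (n + 1, m))*(u (n + 1, m + 1))*c₁^3*c₂*c₃^2) + ((2 : ℝ)*(u (n, m))*(u (n, m + 1))*(u (n + 1, m))^2*c₁^3*c₂*c₃^2) + ((-1 : ℝ)*(u (n, m + 1))^2*(u (n + 1, m))*(u (n + 1, m + 1))*c₁^2*c₂*c₃^3) + ((-1 : ℝ)*(u (n, m + 1))*(u (n + 1, m))*(u (n + 1, m + 1))^2*c₁^3*c₃^4) + ((-1 : ℝ)*(u (n, m + 1))*(u (n + 1, m + 1))^3*c₁^2*c₂*c₃^4)) * H2 + (((-1 : ℝ)*(u (n + 1, m - 1))*(u (n, m))^3*c₁^2*c₂^2*c₃) + ((2 : ℝ)*(u (n + 1, m - 1))*(u (n, m))^2*(u (n + 1, m))*c₁^3*c₂*c₃^2) + ((-1 : ℝ)*(u (n + 1, m - 1))*(u (n, m))^2*(u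 (n + 1, m))*c₁^2*c₂^3*c₃) + ((u (n + 1, m - 1))*(u (n, m))^2*(u (n + 1, m + 1))*c₁^2*c₂^2*c₃^2) + ((-1 : ℝ)*(u (n + 1, m - 1))*(u (n, m))*(u (n + 1, m))^2*c₁^4*c₃^3) + ((-2 : ℝ)*(u (n + 1, m - 1))*(u (n, m))*(u (n + 1, m))*(u (n + 1, m + 1))*c₁^3*c₂*c₃^3) + ((-1 : ℝ)*(u (n + 1, m - 1))*(u (n, m))*(u (n + 1, m + 1))^2*c₁^2*c₂^2*c₃^3) + ((-1 : ℝ)*(u (n + 1, m - 1))*(u (n, m + 1))*(u (n + 1, m))^2*c₁^3*c₂*c₃^3) + ((-1 : ℝ)*(u (n + 1, m - 1))*(u (n, m + 1))*(u (n + 1, m))*(u (n + 1, m + 1))*c₁^3*c₃^4) + ((-1 : ℝ)*(u (n + 1, m - 1))*(u (n, m + 1))*(u (n + 1, m))*(u (n + 1, m + 1))*c₁^2*c₂^2*c₃^3) + ((-1 : ℝ)*(u (n + 1, m - 1))*(u (n, m + 1))*(u (n + 1, m + 1))^2*c₁^2*c₂*c₃^4) + ((-1 : ℝ)*(u (n,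 m - 1))*(u (n, m))^3*c₁^2*c₂*c₃) + ((u (n, m - 1))*(u (n, m))^2*(u (n + 1, m))*c₁^3*c₃^2) + ((-2 : ℝ)*(u (n, m - 1))*(u (n, m))^2*(u (n + 1, m))*c₁^2*c₂^2*c₃) + ((-1 : ℝ)*(u (n, m - 1))*(u (n, m))^2*(u (n + 1, m + 1))*c₁^2*c₂*c₃^2) + ((u (n, m - 1))*(u (n, m))*(u (n + 1, m))^2*c₁^3*c₂*c₃^2) + ((-1 : ℝ)*(u (n, m - 1))*(u (n, m))*(u (n + 1, m))^2*c₁^2*c₂^3*c₃) + ((u (n, m - 1))*(u (n, m))*(u (n + 1, m))*(u (n + 1, m + 1))*c₁^3*c₃^3) + ((-1 : ℝ)*(u (n, m - 1))*(u (n, m))*(u (n + 1, m))*(u (n + 1, m + 1))*c₁^2*c₂^2*c₃^2) + ((-1 : ℝ)*(u (n, m))^3*(u (n + 1, m))*c₁^2*c₂*c₃^2) + ((u (n, m))^2*(u (n + 1, m))^2*c₁^3*c₃^3) + ((-1 : ℝ)*(u (n, m))^2*(u (n + 1, m))^2*c₁^2*c₂^2*c₃^2) + ((-1 : ℝ)*(u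 (n, m))^2*(u (n + 1, m))*(u (n + 1, m + 1))*c₁^2*c₂*c₃^3) + ((-1 : ℝ)*(u (n, m))^2*(u (n + 1, m + 1))^2*c₁*c₂^2*c₃^3) + ((u (n, m))*(u (n + 1, m))^2*(u (n + 1, m + 1))*c₁^3*c₃^4) + ((2 : ℝ)*(u (n, m))*(u (n + 1, m))*(u (n + 1, m + 1))^2*c₁^2*c₂*c₃^4) + ((u (n, m))*(u (n + 1, m + 1))^3*c₁*c₂^2*c₃^4) + ((u (n, m + 1))*(u (n + 1, m))^2*(u (n + 1, m + 1))*c₁^2*c₂*c₃^4) + ((u (n, m + 1))*(u (n + 1, m))*(u (n + 1, m + 1))^2*c₁^2*c₃^5) + ((u (n, m + 1))*(u (n + 1, m))*(u (n + 1, m + 1))^2*c₁*c₂^2*c₃^4) + ((u (n, m + 1))*(u (n + 1, m + 1))^3*c₁*c₂*c₃^5)) * H3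
)
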